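/- Let S be a Steiner triple system of order n with n > 3. If α(S) = (1/3)·C(n,2), then the number of pasch configurations contained in S equals n(n−1)(n−3)/24. -/

import Mathlib

/-- A Steiner quasigroup structure on `X`. -/
def IsSteinerQuasigroup {X : Type*} (star : X → X → X) : Prop :=
  (∀ a, star a a = a) ∧ (∀ a b, star a b = star b a) ∧
    (∀ a b, star a (star a b) = b)

/-- The blocks of the Steiner triple system associated to a Steiner quasigroup:
the 3-element subsets `{a,b,c}` with `a,b,c` distinct and `a ⋆ b = c`. -/
def blocksOf {X : Type*} [DecidableEq X] (star : X → X → X) : Set (Finset X) :=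
  {B | ∃ a b c : X, a ≠ b ∧ a ≠ c ∧ b ≠ c ∧ B = {a, b, c} ∧ star a b = c}

/-- `A(S) = {{a⋆b, b⋆c, c⋆a} : a,b,c pairwise distinct, {a,b,c} ∉ S}`. -/
def ASet {X : Type*} [DecidableEq X] (star : X → X → X) : Set (Finset X) :=
  {B | ∃ a b c : X, a ≠ b ∧ a ≠ c ∧ b ≠ c ∧
    ({a, b, c} : Finset X) ∉ blocksOf star ∧
    B = {star a b, star b c, star c a}}

/-- `B(S) = {{a⋆b, b⋆c, c⋆a} : a,b,c pairwise distinct}`. -/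
def BSet {X : Type*} [DecidableEq X] (star : X → X → X) : Set (Finset X) :=
  {B | ∃ a b c : X, a ≠ b ∧ a ≠ c ∧ b ≠ c ∧
    B = {star a b, star b c, star c a}}

/-- `α(S) = |A(S)|`. -/
noncomputable def alphaInv {X : Type*} [DecidableEq X] (star : X → X → X) : ℕ :=
  (ASet star).ncard

/-- `β(S) = |B(S)|`. -/
noncomputable def betaInv {X : Type*} [DecidableEq X] (star : X → X → X) : ℕ :=
  (BSet star).ncard

/-- A pasch configuration: four blocks `{a,b,c}, {a,d,e}, {f,b,d}, {f,c,e}`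
with `a,b,c,d,e,f` pairwise distinct. -/
def IsPasch {X : Type*} [DecidableEq X] (P : Set (Finset X)) : Prop :=
  ∃ a b c d e f : X, ([a, b, c, d, e, f] : List X).Pairwise (· ≠ ·) ∧
    P = {({a, b, c} : Finset X), {a, d, e}, {f, b, d}, {f, c, e}}

/-- A Steiner triple system is anti-pasch if it contains no pasch configuration. -/
def IsAntiPasch {X : Type*} [DecidableEq X] (star : X → X → X) : Prop :=
  ∀ P : Set (Finset X), IsPasch P → ¬ P ⊆ blocksOf star



/-! ### Auxiliary material -/

set_option linter.unusedSectionVars false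
set_option linter.unusedVariables false
set_option maxHeartbeats 1000000

section SQBasic
variable {X : Type*} [DecidableEq X] {star : X → X → X}

lemma sq_cancel (hq : IsSteinerQuasigroup star) {a b c : X} (h : star a b = star a c) : b = c := by
  have := hq.2.2 a b; rw [h, hq.2.2] at this; exact this.symm

lemma sq_ne_left (hq : IsSteinerQuasigroup star) {a b : X} (h : a ≠ b) : star a b ≠ a := by
  intro he
  have := hq.2.2 a b
  rw [he, hq.1] at this
  exact h this

lemma sq_ne_right (hq : IsSteinerQuasigroup star) {a b : X} (h : a ≠ b) : star a b ≠ b := by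
  rw [hq.2.1]; exact sq_ne_left hq (Ne.symm h)

lemma sq_shift (hq : IsSteinerQuasigroup star) {a b c : X} (h : star a b = c) : star a c = b := by
  rw [← h, hq.2.2]

lemma sq_shift' (hq : IsSteinerQuasigroup star) {a b c : X} (h : star a b = c) : star b c = a := by
  rw [← h, hq.2.1 a b, hq.2.2]

lemma block_eval (hq : IsSteinerQuasigroup star) {a b c : X} (hab : a ≠ b) (hac : a ≠ c)
    (hbc : b ≠ c) (h : ({a,b,c} : Finset X) ∈ blocksOf star) : star a b = c := by
  obtain ⟨x, y, z, hxy, hxz, hyz, hset, hmul⟩ := h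
  have e1 : star x y = z := hmul
  have e2 : star y x = z := by rw [hq.2.1]; exact hmul
  have e3 : star x z = y := sq_shift hq hmul
  have e4 : star z x = y := by rw [hq.2.1]; exact e3
  have e5 : star y z = x := sq_shift' hq hmul
  have e6 : star z y = x := by rw [hq.2.1]; exact e5
  have hsub : ∀ w : X, w ∈ ({a,b,c} : Finset X) ↔ w ∈ ({x,y,z} : Finset X) := by
    intro w; rw [hset]
  have haM : a = x ∨ a = y ∨ a = z := by
    have := (hsub a).1 (by simp); simpa using this
  have hbM : b = x ∨ b = y ∨ b = z := by
    have := (hsub b).1 (by simp); simpa using this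
  have key : star a b ≠ a ∧ star a b ≠ b ∧ (star a b = x ∨ star a b = y ∨ star a b = z) := by
    refine ⟨sq_ne_left hq hab, sq_ne_right hq hab, ?_⟩
    rcases haM with rfl|rfl|rfl <;> rcases hbM with rfl|rfl|rfl <;> simp_all
  obtain ⟨h1, h2, h3⟩ := key
  have hmem : star a b ∈ ({a,b,c} : Finset X) := by
    rw [hsub]; simpa using h3
  simp at hmem
  rcases hmem with h'|h'|h' <;> [exact absurd h' h1; exact absurd h' h2; exact h']

lemma block_mem (hq : IsSteinerQuasigroup star) {a b : X} (h : a ≠ b) :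
    ({a, b, star a b} : Finset X) ∈ blocksOf star :=
  ⟨a, b, star a b, h, (sq_ne_left hq h).symm, (sq_ne_right hq h).symm, rfl, rfl⟩

lemma mem_blocks_iff (hq : IsSteinerQuasigroup star) {a b c : X} (hab : a ≠ b) (hac : a ≠ c)
    (hbc : b ≠ c) : ({a,b,c} : Finset X) ∈ blocksOf star ↔ star a b = c :=
  ⟨block_eval hq hab hac hbc, fun h => ⟨a, b, c, hab, hac, hbc, rfl, h⟩⟩

lemma prods_distinct (hq : IsSteinerQuasigroup star) {a b c : X} (hab : a ≠ b) (hac : a ≠ c)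
    (hbc : b ≠ c) :
    star a b ≠ star b c ∧ star b c ≠ star c a ∧ star a b ≠ star c a := by
  refine ⟨?_, ?_, ?_⟩
  · intro h
    have h1 : star b (star a b) = a := by rw [hq.2.1 a b, hq.2.2]
    have h2 : star b (star b c) = c := hq.2.2 b c
    rw [h, h2] at h1; exact hac h1.symm
  · intro h
    have h1 : star c (star b c) = b := by rw [hq.2.1 b c, hq.2.2]
    have h2 : star c (star c a) = a := hq.2.2 c a
    rw [h, h2] at h1; exact (Ne.symm hab) h1.symm
  · intro h
    have h1 : star a (star a b) = b := hq.2.2 a b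
    have h2 : star a (star c a) = c := by rw [hq.2.1 c a, hq.2.2]
    rw [h, h2] at h1; exact hbc h1.symm

/-- The covering triangle construction. -/
lemma cover_mem (hq : IsSteinerQuasigroup star) {x y b : X} (hxy : x ≠ y)
    (hbx : b ≠ x) (hby : b ≠ y) (hbxy : b ≠ star x y) :
    ({x, y, star (star b y) (star b x)} : Finset X) ∈ ASet star ∧
      star (star b y) (star b x) ≠ x ∧ star (star b y) (star b x) ≠ y := by
  set a := star b x with hadef
  set c := star b y with hcdef
  have hax : star a b = x := by rw [hadef, hq.2.1, hq.2.2]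
  have hbcy : star b c = y := by rw [hcdef, hq.2.2]
  have hab : a ≠ b := sq_ne_left hq hbx
  have hbc : b ≠ c := Ne.symm (sq_ne_left hq hby)
  have hac : a ≠ c := fun h => hxy (sq_cancel hq (show star b x = star b y from h))
  have hnb : ({a,b,c} : Finset X) ∉ blocksOf star := by
    intro hBl
    have h1 : star a b = c := block_eval hq hab hac hbc hBl
    have h2 : star b x = y := by
      rw [← hbcy]; congr 1
      rw [← h1, hax]
    exact hbxy (sq_shift' hq h2).symm
  obtain ⟨p1, p2, p3⟩ := prods_distinct hq hab hac hbc
  rw [hax] at p1 p3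
  rw [hbcy] at p1 p2
  refine ⟨⟨a, b, c, hab, hac, hbc, hnb, ?_⟩, Ne.symm p3, Ne.symm p2⟩
  rw [hax, hbcy]

lemma exists_avoid3 {X : Type*} [Fintype X] [DecidableEq X] (hn : 3 < Fintype.card X)
    (x y z : X) : ∃ b : X, b ≠ x ∧ b ≠ y ∧ b ≠ z := by
  have h3 : ({x, y, z} : Finset X).card ≤ 3 := by
    refine le_trans (Finset.card_insert_le _ _) ?_
    have := Finset.card_insert_le y ({z} : Finset X)
    simp only [Finset.card_singleton] at this
    omega
  obtain ⟨b, hb⟩ : ∃ b, b ∉ ({x, y, z} : Finset X) := by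
    by_contra h
    push_neg at h
    have hsub : (Finset.univ : Finset X) ⊆ {x, y, z} := fun w _ => h w
    have := Finset.card_le_card hsub
    rw [Finset.card_univ] at this
    omega
  simp only [Finset.mem_insert, Finset.mem_singleton, not_or] at hb
  exact ⟨b, hb.1, hb.2.1, hb.2.2⟩

/-- Under the uniqueness hypothesis every block belongs to `A(S)`. -/
lemma blocks_mem_A {X : Type*} [Fintype X] [DecidableEq X] {star : X → X → X}
    (hq : IsSteinerQuasigroup star) (hn : 3 < Fintype.card X)
    (hU : ∀ T₁ ∈ ASet star, ∀ T₂ ∈ ASet star, ∀ x y : X,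
      x ≠ y → x ∈ T₁ → y ∈ T₁ → x ∈ T₂ → y ∈ T₂ → T₁ = T₂)
    {p q : X} (hpq : p ≠ q) : ({p, q, star p q} : Finset X) ∈ ASet star := by
  obtain ⟨b, hbp, hbq, hbr⟩ := exists_avoid3 hn p q (star p q)
  obtain ⟨hT, hz1, hz2⟩ := cover_mem hq hpq hbp hbq hbr
  set w := star (star b q) (star b p) with hw
  by_cases hwr : w = star p q
  · rw [← hwr]; exact hT
  · exfalso
    obtain ⟨hT', hz1', hz2'⟩ := cover_mem hq hpq hz1 hz2 hwr
    set w' := star (star w q) (star w p) with hw'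
    have hTT : ({p, q, w} : Finset X) = ({p, q, w'} : Finset X) :=
      hU _ hT _ hT' p q hpq (by simp) (by simp) (by simp) (by simp)
    have hww' : w' = w := by
      have hm : w' ∈ ({p, q, w'} : Finset X) := by simp
      rw [← hTT] at hm
      simp only [Finset.mem_insert, Finset.mem_singleton] at hm
      rcases hm with h|h|h
      exacts [absurd h hz1', absurd h hz2', h]
    have hst : star (star w q) (star w p) = w := by rw [← hw', hww']
    have h1 : star (star w q) w = star w p := by
      calc star (star w q) w
          = star (star w q) (star (star w q) (star w p)) := by rw [hst]
        _ = star w p := hq.2.2 _ _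
    have h2 : star (star w q) w = q := by rw [hq.2.1]; exact hq.2.2 w q
    have h3 : star w p = q := h1.symm.trans h2
    have h4 : star p q = w := by
      have h5 : star p w = q := by rw [hq.2.1]; exact h3
      exact sq_shift hq h5
    exact hwr h4.symm

/-- Under the uniqueness hypothesis, property P: the image of any triangle is a block. -/
lemma propP_of_unique {X : Type*} [Fintype X] [DecidableEq X] {star : X → X → X}
    (hq : IsSteinerQuasigroup star) (hn : 3 < Fintype.card X)
    (hU : ∀ T₁ ∈ ASet star, ∀ T₂ ∈ ASet star, ∀ x y : X,
      x ≠ y → x ∈ T₁ → y ∈ T₁ → x ∈ T₂ → y ∈ T₂ → T₁ = T₂)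
    {a b c : X} (hab : a ≠ b) (hac : a ≠ c) (hbc : b ≠ c)
    (hnb : ({a,b,c} : Finset X) ∉ blocksOf star) :
    ({star a b, star b c, star c a} : Finset X) ∈ blocksOf star := by
  obtain ⟨pd1, pd2, pd3⟩ := prods_distinct hq hab hac hbc
  have hT : ({star a b, star b c, star c a} : Finset X) ∈ ASet star :=
    ⟨a, b, c, hab, hac, hbc, hnb, rfl⟩
  have hB : ({star a b, star b c, star (star a b) (star b c)} : Finset X) ∈ ASet star :=
    blocks_mem_A hq hn hU pd1
  have heq : ({star a b, star b c, star c a} : Finset X)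
      = {star a b, star b c, star (star a b) (star b c)} :=
    hU _ hT _ hB (star a b) (star b c) pd1 (by simp) (by simp) (by simp) (by simp)
  rw [heq]
  exact block_mem hq pd1

end SQBasic

section PaschCounting
variable {X : Type*} [DecidableEq X]

def Distinct6 (a b c d e f : X) : Prop :=
  a≠b ∧ a≠c ∧ a≠d ∧ a≠e ∧ a≠f ∧ b≠c ∧ b≠d ∧ b≠e ∧ b≠f ∧ c≠d ∧ c≠e ∧ c≠f ∧ d≠e ∧ d≠f ∧ e≠f

def blk6 (a b c d e f : X) : Fin 4 → Finset X
  | ⟨0,_⟩ => {a,b,c}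
  | ⟨1,_⟩ => {a,d,e}
  | ⟨2,_⟩ => {f,b,d}
  | ⟨3,_⟩ => {f,c,e}

def ptm6 (a b c d e f : X) : Fin 4 → Fin 4 → X
  | ⟨0,_⟩, ⟨1,_⟩ => a
  | ⟨0,_⟩, ⟨2,_⟩ => b
  | ⟨0,_⟩, ⟨3,_⟩ => c
  | ⟨1,_⟩, ⟨0,_⟩ => a
  | ⟨1,_⟩, ⟨2,_⟩ => d
  | ⟨1,_⟩, ⟨3,_⟩ => e
  | ⟨2,_⟩, ⟨0,_⟩ => b
  | ⟨2,_⟩, ⟨1,_⟩ => d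
  | ⟨2,_⟩, ⟨3,_⟩ => f
  | ⟨3,_⟩, ⟨0,_⟩ => c
  | ⟨3,_⟩, ⟨1,_⟩ => e
  | ⟨3,_⟩, ⟨2,_⟩ => f
  | _, _ => a

lemma blk6_inter {a b c d e f : X} (hd : Distinct6 a b c d e f) {i j : Fin 4} (hij : i ≠ j) :
    blk6 a b c d e f i ∩ blk6 a b c d e f j = {ptm6 a b c d e f i j} := by
  obtain ⟨h1,h2,h3,h4,h5,h6,h7,h8,h9,h10,h11,h12,h13,h14,h15⟩ := hd
  fin_cases i <;> fin_cases j <;>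
    first
    | exact absurd rfl hij
    | (simp only [blk6, ptm6]
       ext x
       simp only [Finset.mem_inter, Finset.mem_insert, Finset.mem_singleton]
       constructor
       · rintro ⟨h|h|h, h'|h'|h'⟩ <;> subst h <;> simp_all
       · rintro rfl; simp_all)

lemma blk6_row {a b c d e f : X} {i j k l : Fin 4}
    (hij : i ≠ j) (hik : i ≠ k) (hil : i ≠ l) (hjk : j ≠ k) (hjl : j ≠ l) (hkl : k ≠ l) :
    ({ptm6 a b c d e f i j, ptm6 a b c d e f i k, ptm6 a b c d e f i l} : Finset X)
      = blk6 a b c d e f i := by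
  fin_cases i <;> fin_cases j <;> fin_cases k <;> fin_cases l <;>
    first
    | exact absurd rfl hij
    | exact absurd rfl hik
    | exact absurd rfl hil
    | exact absurd rfl hjk
    | exact absurd rfl hjl
    | exact absurd rfl hkl
    | (ext x
       try simp only [blk6, ptm6, Finset.mem_insert, Finset.mem_singleton]
       try tauto)

lemma ptm6_ne {a b c d e f : X} (hd : Distinct6 a b c d e f) {i j k l : Fin 4}
    (hij : i ≠ j) (hkl : k ≠ l) (h1 : ¬(i = k ∧ j = l)) (h2 : ¬(i = l ∧ j = k)) :
    ptm6 a b c d e f i j ≠ ptm6 a b c d e f k l := by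
  obtain ⟨d1,d2,d3,d4,d5,d6,d7,d8,d9,d10,d11,d12,d13,d14,d15⟩ := hd
  fin_cases i <;> fin_cases j <;> fin_cases k <;> fin_cases l <;>
    first
    | exact absurd rfl hij
    | exact absurd rfl hkl
    | (simp only [ptm6]
       first
       | assumption
       | (apply Ne.symm; assumption))
    | exact absurd (And.intro rfl rfl) h1
    | exact absurd (And.intro rfl rfl) h2

abbrev X6 (X : Type*) := X × X × X × X × X × X

def blkT : X6 X → Fin 4 → Finset X
  | (a,b,c,d,e,f) => blk6 a b c d e f

def ptmT : X6 X → Fin 4 → Fin 4 → X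
  | (a,b,c,d,e,f) => ptm6 a b c d e f

def D6T : X6 X → Prop
  | (a,b,c,d,e,f) => Distinct6 a b c d e f

def gdT (star : X → X → X) (t : X6 X) : Prop :=
  D6T t ∧ ∀ i, blkT t i ∈ blocksOf star

def paschOfT : X6 X → Set (Finset X)
  | (a,b,c,d,e,f) => {({a,b,c} : Finset X), {a,d,e}, {f,b,d}, {f,c,e}}

lemma blk6_card {a b c d e f : X} (hd : Distinct6 a b c d e f) (i : Fin 4) :
    (blk6 a b c d e f i).card = 3 := by
  obtain ⟨d1,d2,d3,d4,d5,d6,d7,d8,d9,d10,d11,d12,d13,d14,d15⟩ := hd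
  fin_cases i
  · exact Finset.card_eq_three.mpr ⟨a,b,c,d1,d2,d6,rfl⟩
  · exact Finset.card_eq_three.mpr ⟨a,d,e,d3,d4,d13,rfl⟩
  · exact Finset.card_eq_three.mpr ⟨f,b,d,(Ne.symm d9),(Ne.symm d14),d7,rfl⟩
  · exact Finset.card_eq_three.mpr ⟨f,c,e,(Ne.symm d12),(Ne.symm d15),d11,rfl⟩

lemma blk6_ne {a b c d e f : X} (hd : Distinct6 a b c d e f) {i j : Fin 4} (hij : i ≠ j) :
    blk6 a b c d e f i ≠ blk6 a b c d e f j := by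
  intro h
  have h2 := blk6_inter hd hij
  rw [h, Finset.inter_self] at h2
  have c3 := blk6_card hd j
  rw [h2] at c3
  simp at c3

lemma mem_paschOfT {t : X6 X} {B : Finset X} :
    B ∈ paschOfT t ↔ ∃ i, B = blkT t i := by
  obtain ⟨a,b,c,d,e,f⟩ := t
  show B ∈ ({({a,b,c} : Finset X), {a,d,e}, {f,b,d}, {f,c,e}} : Set (Finset X)) ↔ _
  simp only [Set.mem_insert_iff, Set.mem_singleton_iff]
  constructor
  · rintro (h|h|h|h)
    exacts [⟨0, h⟩, ⟨1, h⟩, ⟨2, h⟩, ⟨3, h⟩]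
  · rintro ⟨i, h⟩
    fin_cases i <;> [exact Or.inl h; exact Or.inr (Or.inl h);
      exact Or.inr (Or.inr (Or.inl h)); exact Or.inr (Or.inr (Or.inr h))]

lemma tuple_ext {t1 t2 : X6 X} (hd2 : D6T t2) (h : ∀ i, blkT t1 i = blkT t2 i) : t1 = t2 := by
  obtain ⟨a1,b1,c1,d1,e1,f1⟩ := t1
  obtain ⟨a2,b2,c2,d2,e2,f2⟩ := t2
  have h' : ∀ i, blk6 a1 b1 c1 d1 e1 f1 i = blk6 a2 b2 c2 d2 e2 f2 i := h
  have key : ∀ (i j : Fin 4), i ≠ j → ∀ x : X,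
      x ∈ blk6 a1 b1 c1 d1 e1 f1 i → x ∈ blk6 a1 b1 c1 d1 e1 f1 j →
      x = ptm6 a2 b2 c2 d2 e2 f2 i j := by
    intro i j hij x hxi hxj
    have h2 := blk6_inter hd2 hij
    have hx : x ∈ blk6 a2 b2 c2 d2 e2 f2 i ∩ blk6 a2 b2 c2 d2 e2 f2 j := by
      rw [Finset.mem_inter, ← h' i, ← h' j]
      exact ⟨hxi, hxj⟩
    rw [h2, Finset.mem_singleton] at hx
    exact hx
  have ha : a1 = a2 := key 0 1 (by decide) a1 (by simp [blk6]) (by simp [blk6])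
  have hb : b1 = b2 := key 0 2 (by decide) b1 (by simp [blk6]) (by simp [blk6])
  have hc : c1 = c2 := key 0 3 (by decide) c1 (by simp [blk6]) (by simp [blk6])
  have hd : d1 = d2 := key 1 2 (by decide) d1 (by simp [blk6]) (by simp [blk6])
  have he : e1 = e2 := key 1 3 (by decide) e1 (by simp [blk6]) (by simp [blk6])
  have hf : f1 = f2 := key 2 3 (by decide) f1 (by simp [blk6]) (by simp [blk6])
  simp [ha, hb, hc, hd, he, hf]

lemma ptm6_symm (a b c d e f : X) (i j : Fin 4) :
    ptm6 a b c d e f i j = ptm6 a b c d e f j i := by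
  fin_cases i <;> fin_cases j <;> rfl

lemma orbit_good {star : X → X → X} {t : X6 X} (hg : gdT star t)
    {σ : Fin 4 → Fin 4} (hσ : Function.Injective σ) :
    ∃ t' : X6 X, gdT star t' ∧ (∀ i, blkT t' i = blkT t (σ i)) ∧ paschOfT t' = paschOfT t := by
  obtain ⟨a,b,c,d,e,f⟩ := t
  obtain ⟨hd, hb⟩ := hg
  have hd6 : Distinct6 a b c d e f := hd
  have hne : ∀ i j : Fin 4, i ≠ j → σ i ≠ σ j := fun i j h hh => h (hσ hh)
  refine ⟨(ptm6 a b c d e f (σ 0) (σ 1), ptm6 a b c d e f (σ 0) (σ 2),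
      ptm6 a b c d e f (σ 0) (σ 3), ptm6 a b c d e f (σ 1) (σ 2),
      ptm6 a b c d e f (σ 1) (σ 3), ptm6 a b c d e f (σ 2) (σ 3)), ?_⟩
  have hblk : ∀ i, blkT (ptm6 a b c d e f (σ 0) (σ 1), ptm6 a b c d e f (σ 0) (σ 2),
      ptm6 a b c d e f (σ 0) (σ 3), ptm6 a b c d e f (σ 1) (σ 2),
      ptm6 a b c d e f (σ 1) (σ 3), ptm6 a b c d e f (σ 2) (σ 3)) i
      = blkT (a,b,c,d,e,f) (σ i) := by
    intro i
    fin_cases i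
    · show ({ptm6 a b c d e f (σ 0) (σ 1), ptm6 a b c d e f (σ 0) (σ 2),
        ptm6 a b c d e f (σ 0) (σ 3)} : Finset X) = blk6 a b c d e f (σ 0)
      exact blk6_row (hne 0 1 (by decide)) (hne 0 2 (by decide)) (hne 0 3 (by decide))
        (hne 1 2 (by decide)) (hne 1 3 (by decide)) (hne 2 3 (by decide))
    · show ({ptm6 a b c d e f (σ 0) (σ 1), ptm6 a b c d e f (σ 1) (σ 2),
        ptm6 a b c d e f (σ 1) (σ 3)} : Finset X) = blk6 a b c d e f (σ 1)
      rw [ptm6_symm a b c d e f (σ 0) (σ 1)]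
      exact blk6_row (hne 1 0 (by decide)) (hne 1 2 (by decide)) (hne 1 3 (by decide))
        (hne 0 2 (by decide)) (hne 0 3 (by decide)) (hne 2 3 (by decide))
    · show ({ptm6 a b c d e f (σ 2) (σ 3), ptm6 a b c d e f (σ 0) (σ 2),
        ptm6 a b c d e f (σ 1) (σ 2)} : Finset X) = blk6 a b c d e f (σ 2)
      rw [ptm6_symm a b c d e f (σ 0) (σ 2), ptm6_symm a b c d e f (σ 1) (σ 2)]
      exact blk6_row (hne 2 3 (by decide)) (hne 2 0 (by decide)) (hne 2 1 (by decide))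
        (hne 3 0 (by decide)) (hne 3 1 (by decide)) (hne 0 1 (by decide))
    · show ({ptm6 a b c d e f (σ 2) (σ 3), ptm6 a b c d e f (σ 0) (σ 3),
        ptm6 a b c d e f (σ 1) (σ 3)} : Finset X) = blk6 a b c d e f (σ 3)
      rw [ptm6_symm a b c d e f (σ 2) (σ 3), ptm6_symm a b c d e f (σ 0) (σ 3),
        ptm6_symm a b c d e f (σ 1) (σ 3)]
      exact blk6_row (hne 3 2 (by decide)) (hne 3 0 (by decide)) (hne 3 1 (by decide))
        (hne 2 0 (by decide)) (hne 2 1 (by decide)) (hne 0 1 (by decide))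
  refine ⟨⟨?_, ?_⟩, hblk, ?_⟩
  · show Distinct6 _ _ _ _ _ _
    refine ⟨?_,?_,?_,?_,?_,?_,?_,?_,?_,?_,?_,?_,?_,?_,?_⟩ <;>
      (apply ptm6_ne hd6 (hne _ _ (by decide)) (hne _ _ (by decide)) <;>
        (rintro ⟨u, v⟩
         first
         | exact hne _ _ (by decide) u
         | exact hne _ _ (by decide) v))
  · intro i
    rw [hblk i]
    exact hb (σ i)
  · ext B
    rw [mem_paschOfT, mem_paschOfT]
    constructor
    · rintro ⟨i, h⟩
      exact ⟨σ i, by rw [h, hblk i]⟩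
    · rintro ⟨j, h⟩
      obtain ⟨i, rfl⟩ := (Finite.injective_iff_surjective.mp hσ) j
      exact ⟨i, by rw [h, hblk i]⟩

lemma gdT_distinct {star : X → X → X} {t : X6 X} (hg : gdT star t) : D6T t := hg.1

lemma blkT_ne {t : X6 X} (hd : D6T t) {i j : Fin 4} (hij : i ≠ j) :
    blkT t i ≠ blkT t j := by
  obtain ⟨a,b,c,d,e,f⟩ := t
  exact blk6_ne hd hij

lemma exists_sigma {star : X → X → X} {t t' : X6 X} (hg : gdT star t) (hg' : gdT star t')
    (hpp : paschOfT t' = paschOfT t) :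
    ∃ σ : Fin 4 → Fin 4, Function.Injective σ ∧ ∀ i, blkT t' i = blkT t (σ i) := by
  have H : ∀ i, ∃ j, blkT t' i = blkT t j := by
    intro i
    have hm : blkT t' i ∈ paschOfT t' := mem_paschOfT.mpr ⟨i, rfl⟩
    rw [hpp] at hm
    exact mem_paschOfT.mp hm
  choose σ hσ using H
  refine ⟨σ, ?_, hσ⟩
  intro i j hij
  by_contra hne
  exact blkT_ne (gdT_distinct hg') hne (by rw [hσ i, hσ j, hij])

lemma fiber_ncard {star : X → X → X} {t : X6 X} (hg : gdT star t) :
    {t' : X6 X | gdT star t' ∧ paschOfT t' = paschOfT t}.ncard = 24 := by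
  classical
  have hO : ∀ σ : Equiv.Perm (Fin 4), ∃ t' : X6 X, gdT star t' ∧
      (∀ i, blkT t' i = blkT t (σ i)) ∧ paschOfT t' = paschOfT t :=
    fun σ => orbit_good hg σ.injective
  choose F hF1 hF2 hF3 using hO
  have hrange : {t' : X6 X | gdT star t' ∧ paschOfT t' = paschOfT t} = Set.range F := by
    ext t'
    constructor
    · rintro ⟨hg', hpp⟩
      obtain ⟨σ, hσinj, hσ⟩ := exists_sigma hg hg' hpp
      have hbij : Function.Bijective σ := Finite.injective_iff_bijective.mp hσinj
      refine ⟨Equiv.ofBijective σ hbij, ?_⟩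
      apply tuple_ext (gdT_distinct hg')
      intro i
      rw [hF2 (Equiv.ofBijective σ hbij) i]
      exact (hσ i).symm
    · rintro ⟨σ, rfl⟩
      exact ⟨hF1 σ, hF3 σ⟩
  rw [hrange]
  have hFinj : Function.Injective F := by
    intro σ τ h
    apply Equiv.ext
    intro i
    by_contra hne
    apply blkT_ne (gdT_distinct hg) hne
    rw [← hF2 σ i, ← hF2 τ i, h]
  rw [← Set.image_univ, Set.ncard_image_of_injective _ hFinj, Set.ncard_univ,
    Nat.card_eq_fintype_card, Fintype.card_perm]
  rfl

end PaschCounting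

section Assembly
variable {X : Type*} [Fintype X] [DecidableEq X] {star : X → X → X}

lemma isPasch_iff (star : X → X → X) (P : Set (Finset X)) :
    (IsPasch P ∧ P ⊆ blocksOf star) ↔ ∃ t : X6 X, gdT star t ∧ paschOfT t = P := by
  constructor
  · rintro ⟨⟨a, b, c, d, e, f, hpw, hP⟩, hsub⟩
    refine ⟨(a,b,c,d,e,f), ⟨?_, ?_⟩, hP.symm⟩
    · show Distinct6 a b c d e f
      simp only [List.pairwise_cons, List.mem_cons, List.not_mem_nil, List.mem_singleton,
        or_false, forall_eq_or_imp, forall_eq, List.Pairwise.nil, and_true] at hpw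
      refine ⟨?_,?_,?_,?_,?_,?_,?_,?_,?_,?_,?_,?_,?_,?_,?_⟩ <;> tauto
    · intro i
      fin_cases i
      · exact hsub (by rw [hP]; exact Set.mem_insert _ _)
      · refine hsub ?_
        show ({a,d,e} : Finset X) ∈ P
        rw [hP]; simp
      · refine hsub ?_
        show ({f,b,d} : Finset X) ∈ P
        rw [hP]; simp
      · refine hsub ?_
        show ({f,c,e} : Finset X) ∈ P
        rw [hP]; simp
  · rintro ⟨⟨a,b,c,d,e,f⟩, ⟨hd, hb⟩, rfl⟩
    obtain ⟨h1,h2,h3,h4,h5,h6,h7,h8,h9,h10,h11,h12,h13,h14,h15⟩ := (hd : Distinct6 a b c d e f)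
    constructor
    · refine ⟨a, b, c, d, e, f, ?_, rfl⟩
      simp only [List.pairwise_cons, List.mem_cons, List.not_mem_nil, List.mem_singleton,
        or_false, forall_eq_or_imp, forall_eq, List.Pairwise.nil, and_true]
      tauto
    · intro B hB
      obtain ⟨i, rfl⟩ := mem_paschOfT.mp hB
      exact hb i

lemma pasch_count (star : X → X → X) :
    24 * {P : Set (Finset X) | IsPasch P ∧ P ⊆ blocksOf star}.ncard
      = {t : X6 X | gdT star t}.ncard := by
  classical
  set G : Finset (X6 X) := Finset.univ.filter (fun t => gdT star t) with hG
  have hGset : {t : X6 X | gdT star t} = ↑G := by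
    ext t; simp [hG]
  set PF : Finset (Set (Finset X)) := G.image paschOfT with hPF
  have h1 : {P : Set (Finset X) | IsPasch P ∧ P ⊆ blocksOf star} = ↑PF := by
    ext P
    rw [Set.mem_setOf_eq, isPasch_iff star P]
    simp only [hPF, Finset.coe_image, Set.mem_image, Finset.mem_coe, Finset.mem_filter,
      Finset.mem_univ, true_and, hG]
  rw [h1, Set.ncard_coe_finset, hGset, Set.ncard_coe_finset]
  have h2 : G.card = ∑ P ∈ PF, (G.filter (fun t => paschOfT t = P)).card :=
    Finset.card_eq_sum_card_image paschOfT G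
  have h3 : ∀ P ∈ PF, (G.filter (fun t => paschOfT t = P)).card = 24 := by
    intro P hP
    obtain ⟨t, htG, rfl⟩ := Finset.mem_image.mp hP
    have htg : gdT star t := (Finset.mem_filter.mp htG).2
    have hcoe : ↑(G.filter (fun t' => paschOfT t' = paschOfT t))
        = {t' : X6 X | gdT star t' ∧ paschOfT t' = paschOfT t} := by
      ext t'; simp [hG]
    have := fiber_ncard htg
    rw [← hcoe, Set.ncard_coe_finset] at this
    exact this
  rw [h2, Finset.sum_congr rfl h3, Finset.sum_const, smul_eq_mul, mul_comm]

lemma good_count (hq : IsSteinerQuasigroup star)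
    (hP : ∀ a b c : X, a ≠ b → a ≠ c → b ≠ c → ({a,b,c} : Finset X) ∉ blocksOf star →
      ({star a b, star b c, star c a} : Finset X) ∈ blocksOf star) :
    {t : X6 X | gdT star t}.ncard
      = Fintype.card X * (Fintype.card X - 1) * (Fintype.card X - 3) := by
  classical
  set n := Fintype.card X with hn
  set G : Finset (X6 X) := Finset.univ.filter (fun t => gdT star t) with hG
  have hGset : {t : X6 X | gdT star t} = ↑G := by ext t; simp [hG]
  rw [hGset, Set.ncard_coe_finset]
  set D : Finset (X × X × X) := Finset.univ.filter
    (fun s => s.1 ≠ s.2.1 ∧ s.2.2 ≠ s.1 ∧ s.2.2 ≠ s.2.1 ∧ s.2.2 ≠ star s.1 s.2.1) with hD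
  have hbij : G.card = D.card := by
    apply Finset.card_nbij' (fun t => (t.1, t.2.1, t.2.2.2.1))
      (fun s => (s.1, s.2.1, star s.1 s.2.1, s.2.2, star s.1 s.2.2, star s.2.1 s.2.2))
    · -- forward maps into D
      rintro ⟨a,b,c,d,e,f⟩ ht
      rw [Finset.mem_coe, hG, Finset.mem_filter] at ht
      obtain ⟨-, hd, hb⟩ := ht
      obtain ⟨h1,h2,h3,h4,h5,h6,h7,h8,h9,h10,h11,h12,h13,h14,h15⟩ := (hd : Distinct6 a b c d e f)
      have hc : star a b = c := by
        have := hb 0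
        exact block_eval hq h1 h2 h6 this
      rw [Finset.mem_coe, hD, Finset.mem_filter]
      exact ⟨Finset.mem_univ _, h1, Ne.symm h3, Ne.symm h7, by rw [hc]; exact Ne.symm h10⟩
    · -- backward maps into G
      rintro ⟨a,b,d⟩ hs
      rw [Finset.mem_coe, hD, Finset.mem_filter] at hs
      obtain ⟨-, hab, hda, hdb, hdc⟩ := hs
      have had : a ≠ d := Ne.symm hda
      have hbd : b ≠ d := Ne.symm hdb
      rw [Finset.mem_coe, hG, Finset.mem_filter]
      refine ⟨Finset.mem_univ _, ?_, ?_⟩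
      · show Distinct6 a b (star a b) d (star a d) (star b d)
        refine ⟨hab, (sq_ne_left hq hab).symm, had, (sq_ne_left hq had).symm, ?_,
          (sq_ne_right hq hab).symm, hbd, ?_, (sq_ne_left hq hbd).symm, ?_, ?_, ?_,
          (sq_ne_right hq had).symm, (sq_ne_right hq hbd).symm, ?_⟩
        · -- a ≠ star b d
          intro h
          apply hdc
          have h2 : star b a = d := sq_shift hq h.symm
          rw [← h2, hq.2.1]
        · -- b ≠ star a d
          intro h
          exact hdc (sq_shift hq h.symm).symm
        · -- star a b ≠ d
          exact Ne.symm hdc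
        · -- star a b ≠ star a d
          intro h
          exact hbd (sq_cancel hq h)
        · -- star a b ≠ star b d
          intro h
          apply hda
          have : star b (star a b) = star b (star b d) := by rw [h]
          rw [hq.2.2, hq.2.1 a b, hq.2.2] at this
          exact this.symm
        · -- star a d ≠ star b d
          intro h
          have h' : star d a = star d b := by
            rw [hq.2.1 d a, hq.2.1 d b]; exact h
          exact hab (sq_cancel hq h')
      · intro i
        fin_cases i
        · exact block_mem hq hab
        · exact block_mem hq had
        · -- {star b d, b, d} ∈ blocksOf star
          show ({star b d, b, d} : Finset X) ∈ blocksOf star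
          have heq : ({star b d, b, d} : Finset X) = {b, d, star b d} := by
            ext x; simp only [Finset.mem_insert, Finset.mem_singleton]; tauto
          rw [heq]
          exact block_mem hq hbd
        · -- {star b d, star a b, star a d} ∈ blocksOf star
          show ({star b d, star a b, star a d} : Finset X) ∈ blocksOf star
          have hnb : ({b, a, d} : Finset X) ∉ blocksOf star := by
            rw [mem_blocks_iff hq (Ne.symm hab) hbd had]
            rw [hq.2.1]
            exact fun h => hdc h.symm
          have hblk := hP b a d (Ne.symm hab) hbd had hnb
          have heq : ({star b a, star a d, star d b} : Finset X)
              = {star b d, star a b, star a d} := by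
            rw [hq.2.1 b a, hq.2.1 d b]
            ext x; simp only [Finset.mem_insert, Finset.mem_singleton]; tauto
          rw [← heq]
          exact hblk
    · -- left inverse
      rintro ⟨a,b,c,d,e,f⟩ ht
      rw [Finset.mem_coe, hG, Finset.mem_filter] at ht
      obtain ⟨-, hd, hb⟩ := ht
      obtain ⟨h1,h2,h3,h4,h5,h6,h7,h8,h9,h10,h11,h12,h13,h14,h15⟩ := (hd : Distinct6 a b c d e f)
      have hc : star a b = c := block_eval hq h1 h2 h6 (hb 0)
      have he : star a d = e := block_eval hq h3 h4 h13 (hb 1)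
      have hf : star b d = f := by
        have hm : ({f, b, d} : Finset X) ∈ blocksOf star := hb 2
        have heq : ({f, b, d} : Finset X) = {b, d, f} := by
          ext x; simp only [Finset.mem_insert, Finset.mem_singleton]; tauto
        rw [heq] at hm
        exact block_eval hq h7 h9 h14 hm
      show (a, b, star a b, d, star a d, star b d) = (a, b, c, d, e, f)
      rw [hc, he, hf]
    · -- right inverse
      rintro ⟨a,b,d⟩ hs
      rfl
  rw [hbij]
  -- now count D
  have hDcard : D.card = n * (n - 1) * (n - 3) := by
    have step1 : ∀ a b : X, a ≠ b →
        (Finset.univ.filter (fun d => d ≠ a ∧ d ≠ b ∧ d ≠ star a b)).card = n - 3 := by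
      intro a b hab
      have hfe : Finset.univ.filter (fun d => d ≠ a ∧ d ≠ b ∧ d ≠ star a b)
          = ({a, b, star a b} : Finset X)ᶜ := by
        ext z
        simp only [Finset.mem_filter, Finset.mem_univ, true_and, Finset.mem_compl,
          Finset.mem_insert, Finset.mem_singleton, not_or]
      rw [hfe, Finset.card_compl]
      have h3 : ({a, b, star a b} : Finset X).card = 3 :=
        Finset.card_eq_three.mpr ⟨a, b, star a b, hab, (sq_ne_left hq hab).symm,
          (sq_ne_right hq hab).symm, rfl⟩
      rw [h3, hn]
    have hsplit : D.card = ∑ a : X, ∑ b : X, ∑ d : X,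
        if a ≠ b ∧ d ≠ a ∧ d ≠ b ∧ d ≠ star a b then 1 else 0 := by
      rw [hD, Finset.card_filter, Fintype.sum_prod_type]
      congr 1
      ext a
      rw [Fintype.sum_prod_type]
    rw [hsplit]
    have hinner : ∀ a b : X, (∑ d : X, if a ≠ b ∧ d ≠ a ∧ d ≠ b ∧ d ≠ star a b then 1 else 0)
        = if a ≠ b then n - 3 else 0 := by
      intro a b
      by_cases hab : a ≠ b
      · have hcong : ∀ d : X, (if a ≠ b ∧ d ≠ a ∧ d ≠ b ∧ d ≠ star a b then 1 else 0)
            = (if d ≠ a ∧ d ≠ b ∧ d ≠ star a b then (1:ℕ) else 0) := by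
          intro d
          by_cases h : d ≠ a ∧ d ≠ b ∧ d ≠ star a b
          · rw [if_pos ⟨hab, h⟩, if_pos h]
          · rw [if_neg (fun hc => h hc.2), if_neg h]
        rw [if_pos hab, Finset.sum_congr rfl (fun d _ => hcong d), ← step1 a b hab,
          Finset.card_filter]
      · rw [if_neg hab]
        apply Finset.sum_eq_zero
        intro d _
        rw [if_neg]
        exact fun hcon => hab hcon.1
    have hmid : ∀ a : X, (∑ b : X, if a ≠ b then n - 3 else 0) = (n - 1) * (n - 3) := by
      intro a
      rw [Finset.sum_ite, Finset.sum_const, Finset.sum_const_zero, add_zero, smul_eq_mul]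
      congr 1
      have hfe : Finset.univ.filter (fun b => a ≠ b) = ({a} : Finset X)ᶜ := by
        ext z
        simp only [Finset.mem_filter, Finset.mem_univ, true_and, Finset.mem_compl,
          Finset.mem_singleton]
        exact ne_comm
      rw [hfe, Finset.card_compl, Finset.card_singleton, hn]
    calc (∑ a : X, ∑ b : X, ∑ d : X,
        if a ≠ b ∧ d ≠ a ∧ d ≠ b ∧ d ≠ star a b then 1 else 0)
        = ∑ a : X, ∑ b : X, (if a ≠ b then n - 3 else 0) := by
          apply Finset.sum_congr rfl; intro a _
          apply Finset.sum_congr rfl; intro b _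
          exact hinner a b
      _ = ∑ a : X, (n - 1) * (n - 3) := by
          apply Finset.sum_congr rfl; intro a _
          exact hmid a
      _ = n * ((n - 1) * (n - 3)) := by
          rw [Finset.sum_const, smul_eq_mul, Finset.card_univ, hn]
      _ = n * (n - 1) * (n - 3) := by ring
  exact hDcard

end Assembly

/-- If `α(S) = (1/3)·C(n,2)`, the number of pasch configurations contained in
`S` is `n(n-1)(n-3)/24` (stated multiplied by 24 to stay in ℕ). -/
theorem stmt6 {X : Type*} [Fintype X] [DecidableEq X]
    (star : X → X → X) (hq : IsSteinerQuasigroup star)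
    (n : ℕ) (hcard : Fintype.card X = n) (hn : 3 < n)
    (ha : 3 * alphaInv star = n.choose 2) :
    24 * {P : Set (Finset X) | IsPasch P ∧ P ⊆ blocksOf star}.ncard =
      n * (n - 1) * (n - 3) := by
  classical
  have hn' : 3 < Fintype.card X := by rw [hcard]; exact hn
  -- double counting: each pair lies in exactly one member of A(S)
  have hfinA : (ASet star).Finite := Set.toFinite _
  set 𝒜 : Finset (Finset X) := hfinA.toFinset with h𝒜
  have hcardA : 𝒜.card = alphaInv star := by
    rw [alphaInv, Set.ncard_eq_toFinset_card _ hfinA]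
  have hA3 : ∀ T ∈ 𝒜, T.card = 3 := by
    intro T hT
    rw [h𝒜, Set.Finite.mem_toFinset] at hT
    obtain ⟨a, b, c, hab, hac, hbc, hnb, rfl⟩ := hT
    obtain ⟨p1, p2, p3⟩ := prods_distinct hq hab hac hbc
    exact Finset.card_eq_three.mpr ⟨_, _, _, p1, p3, p2, rfl⟩
  set P2 : Finset (Finset X) := Finset.univ.powersetCard 2 with hP2
  have hP2card : P2.card = n.choose 2 := by
    rw [hP2, Finset.card_powersetCard, Finset.card_univ, hcard]
  have exchange : ∑ p ∈ P2, (𝒜.filter (fun T => p ⊆ T)).card = 3 * 𝒜.card := by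
    have hrow : ∀ T ∈ 𝒜, (P2.filter (fun p => p ⊆ T)).card = 3 := by
      intro T hT
      have hfe : P2.filter (fun p => p ⊆ T) = T.powersetCard 2 := by
        ext p
        simp only [hP2, Finset.mem_filter, Finset.mem_powersetCard, Finset.subset_univ,
          true_and]
        tauto
      rw [hfe, Finset.card_powersetCard, hA3 T hT]
      rfl
    calc ∑ p ∈ P2, (𝒜.filter (fun T => p ⊆ T)).card
        = ∑ p ∈ P2, ∑ T ∈ 𝒜, if p ⊆ T then 1 else 0 := by
          apply Finset.sum_congr rfl
          intro p _
          rw [Finset.card_filter]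
      _ = ∑ T ∈ 𝒜, ∑ p ∈ P2, if p ⊆ T then 1 else 0 := Finset.sum_comm
      _ = ∑ T ∈ 𝒜, 3 := by
          apply Finset.sum_congr rfl
          intro T hT
          rw [← Finset.card_filter]
          exact hrow T hT
      _ = 3 * 𝒜.card := by rw [Finset.sum_const, smul_eq_mul, mul_comm]
  have hcover : ∀ p ∈ P2, 1 ≤ (𝒜.filter (fun T => p ⊆ T)).card := by
    intro p hp
    rw [hP2, Finset.mem_powersetCard] at hp
    obtain ⟨x, y, hxy, rfl⟩ := Finset.card_eq_two.mp hp.2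
    obtain ⟨b, hbx, hby, hbr⟩ := exists_avoid3 hn' x y (star x y)
    obtain ⟨hT, _, _⟩ := cover_mem hq hxy hbx hby hbr
    refine Finset.card_pos.mpr ⟨{x, y, star (star b y) (star b x)},
      Finset.mem_filter.mpr ⟨?_, ?_⟩⟩
    · rw [h𝒜, Set.Finite.mem_toFinset]; exact hT
    · simp [Finset.insert_subset_iff]
  have hall1 : ∀ p ∈ P2, (𝒜.filter (fun T => p ⊆ T)).card = 1 := by
    by_contra h
    push_neg at h
    obtain ⟨p0, hp0, hne⟩ := h
    have h2 : 1 < (𝒜.filter (fun T => p0 ⊆ T)).card :=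
      lt_of_le_of_ne (hcover p0 hp0) (Ne.symm hne)
    have hlt := Finset.sum_lt_sum (f := fun _ => 1)
      (g := fun p => (𝒜.filter (fun T => p ⊆ T)).card)
      (fun i hi => hcover i hi) ⟨p0, hp0, h2⟩
    rw [Finset.sum_const, smul_eq_mul, mul_one, exchange, hcardA, ha, ← hP2card] at hlt
    exact lt_irrefl _ hlt
  have hU : ∀ T₁ ∈ ASet star, ∀ T₂ ∈ ASet star, ∀ x y : X,
      x ≠ y → x ∈ T₁ → y ∈ T₁ → x ∈ T₂ → y ∈ T₂ → T₁ = T₂ := by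
    intro T₁ h1 T₂ h2 x y hxy hx1 hy1 hx2 hy2
    by_contra hne
    have hp : ({x, y} : Finset X) ∈ P2 :=
      Finset.mem_powersetCard.mpr ⟨Finset.subset_univ _, Finset.card_pair hxy⟩
    have hm1 : T₁ ∈ 𝒜.filter (fun T => ({x, y} : Finset X) ⊆ T) := by
      refine Finset.mem_filter.mpr ⟨?_, ?_⟩
      · rw [h𝒜, Set.Finite.mem_toFinset]; exact h1
      · rw [Finset.insert_subset_iff, Finset.singleton_subset_iff]; exact ⟨hx1, hy1⟩
    have hm2 : T₂ ∈ 𝒜.filter (fun T => ({x, y} : Finset X) ⊆ T) := by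
      refine Finset.mem_filter.mpr ⟨?_, ?_⟩
      · rw [h𝒜, Set.Finite.mem_toFinset]; exact h2
      · rw [Finset.insert_subset_iff, Finset.singleton_subset_iff]; exact ⟨hx2, hy2⟩
    have := Finset.one_lt_card.mpr ⟨T₁, hm1, T₂, hm2, hne⟩
    rw [hall1 _ hp] at this
    exact lt_irrefl _ this
  have hP : ∀ a b c : X, a ≠ b → a ≠ c → b ≠ c → ({a,b,c} : Finset X) ∉ blocksOf star →
      ({star a b, star b c, star c a} : Finset X) ∈ blocksOf star :=
    fun a b c hab hac hbc hnb => propP_of_unique hq hn' hU hab hac hbc hnb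
  rw [pasch_count star, good_count hq hP, hcard]
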